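/- For any CSP (with N variables over a finite domain D, and clauses Φ_1,...,Φ_M) that admits a satisfying assignment, the CFL algorithm's stopping time τ = inf{t ≥ 0 : X(t) is a satisfying assignment} is finite almost surely. -/

import Mathlib

open MeasureTheory Finset

/-- Variable `i` participates in clause `m` if its value can influence the
clause's satisfaction for some assignment of the other variables. -/
def participates {N M D : ℕ} (Φ : Fin M → (Fin N → Fin D) → Bool)
    (i : Fin N) (m : Fin M) : Prop :=
  ∃ x y : Fin N → Fin D, (∀ j, j ≠ i → x j = y j) ∧ Φ m x ≠ Φ m y

/-- All clauses in which variable `i` participates are satisfied by `x`. -/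
def varSat {N M D : ℕ} (Φ : Fin M → (Fin N → Fin D) → Bool)
    (i : Fin N) (x : Fin N → Fin D) : Prop :=
  ∀ m : Fin M, participates Φ i m → Φ m x = true

/-- `x` is a satisfying assignment: all clauses evaluate to `true`. -/
def satAll {N M D : ℕ} (Φ : Fin M → (Fin N → Fin D) → Bool)
    (x : Fin N → Fin D) : Prop :=
  ∀ m : Fin M, Φ m x = true

open Classical in
/-- The (deterministic) CFL probability vectors along a given history `h` of
variable assignments: start uniform; if variable `i` is satisfied at step `t`
collapse to a point mass at its current value, otherwise apply the
interpolation update with parameters `a, b`. -/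
noncomputable def cflVec (a b : ℝ) {N M D : ℕ}
    (Φ : Fin M → (Fin N → Fin D) → Bool) (h : ℕ → Fin N → Fin D) :
    ℕ → Fin N → Fin D → ℝ
  | 0 => fun _ _ => 1 / (D : ℝ)
  | t + 1 => fun i j =>
      if varSat Φ i (h t) then (if j = h t i then 1 else 0)
      else (1 - b) * cflVec a b Φ h t i j +
        (if j = h t i then a else b) / ((D : ℝ) - 1 + a / b)

-- ==================== auxiliary ====================

open Classical in
noncomputable def cflMove {N M D : ℕ} (Φ : Fin M → (Fin N → Fin D) → Bool)
    (xs : Fin N → Fin D) (z : Fin N → Fin D) : Fin N → Fin D :=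
  fun i => if varSat Φ i z then z i else xs i

lemma exists_part_aux {N M D : ℕ} (Φ : Fin M → (Fin N → Fin D) → Bool)
    (m : Fin M) : ∀ n (u v : Fin N → Fin D),
    (Finset.univ.filter fun j => u j ≠ v j).card = n →
    Φ m u ≠ Φ m v → ∃ j, participates Φ j m ∧ u j ≠ v j := by
  intro n
  induction n with
  | zero =>
    intro u v hc huv
    exfalso
    apply huv
    have : u = v := by
      funext j
      by_contra hj
      have hmem : j ∈ Finset.univ.filter fun j => u j ≠ v j := by
        simp [hj]
      rw [Finset.card_eq_zero] at hc
      rw [hc] at hmem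
      exact absurd hmem (Finset.notMem_empty j)
    rw [this]
  | succ n ih =>
    intro u v hc huv
    obtain ⟨j, hj⟩ : ∃ j, u j ≠ v j := by
      by_contra hno
      push_neg at hno
      have : (Finset.univ.filter fun j => u j ≠ v j) = ∅ := by
        apply Finset.filter_eq_empty_iff.2
        intro k _
        simp [hno k]
      rw [this] at hc
      simp at hc
    set u' := Function.update u j (v j) with hu'
    by_cases hphi : Φ m u' = Φ m u
    · have hcard : (Finset.univ.filter fun k => u' k ≠ v k).card = n := by
        have hset : (Finset.univ.filter fun k => u' k ≠ v k)
            = (Finset.univ.filter fun k => u k ≠ v k).erase j := by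
          ext k
          simp only [Finset.mem_filter, Finset.mem_erase, Finset.mem_univ, true_and]
          constructor
          · intro hk
            have hkj : k ≠ j := by
              intro e; subst e
              apply hk
              simp [hu', Function.update_self]
            rw [hu', Function.update_of_ne hkj] at hk
            exact ⟨hkj, hk⟩
          · rintro ⟨hkj, hk⟩
            rw [hu', Function.update_of_ne hkj]
            exact hk
        rw [hset, Finset.card_erase_of_mem (by simp [hj]), hc]
        omega
      obtain ⟨j', hp, hne'⟩ := ih u' v hcard (by rw [hphi]; exact huv)
      have hjj : j' ≠ j := by
        intro e; subst e
        apply hne'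
        simp [hu', Function.update_self]
      rw [hu', Function.update_of_ne hjj] at hne'
      exact ⟨j', hp, hne'⟩
    · exact ⟨j, ⟨u', u, fun k hk => Function.update_of_ne hk _ _, hphi⟩, hj⟩

lemma exists_part {N M D : ℕ} (Φ : Fin M → (Fin N → Fin D) → Bool)
    (m : Fin M) (u v : Fin N → Fin D) (huv : Φ m u ≠ Φ m v) :
    ∃ j, participates Φ j m ∧ u j ≠ v j :=
  exists_part_aux Φ m _ u v rfl huv

lemma cflMove_of_satAll {N M D : ℕ} (Φ : Fin M → (Fin N → Fin D) → Bool)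
    (xs z : Fin N → Fin D) (hz : satAll Φ z) : cflMove Φ xs z = z := by
  funext i
  have : varSat Φ i z := fun m _ => hz m
  simp [cflMove, this]

lemma satAll_iterate {N M D : ℕ} (Φ : Fin M → (Fin N → Fin D) → Bool)
    (xs : Fin N → Fin D) (hxs : satAll Φ xs) (z : Fin N → Fin D) :
    satAll Φ ((cflMove Φ xs)^[N] z) := by
  have key : ∀ k, satAll Φ ((cflMove Φ xs)^[k] z) ∨
      k ≤ (Finset.univ.filter fun i => (cflMove Φ xs)^[k] z i = xs i).card := by
    intro k
    induction k with
    | zero => right; exact Nat.zero_le _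
    | succ k ih =>
      by_cases hs : satAll Φ ((cflMove Φ xs)^[k] z)
      · left
        rw [Function.iterate_succ_apply', cflMove_of_satAll Φ xs _ hs]
        exact hs
      · rcases ih with h | hcard
        · exact absurd h hs
        right
        set w := (cflMove Φ xs)^[k] z with hw
        obtain ⟨m, hm⟩ : ∃ m, ¬ Φ m w = true := by
          by_contra hno; push_neg at hno; exact hs hno
        have hmne : Φ m w ≠ Φ m xs := by rw [hxs m]; exact hm
        obtain ⟨j, hpart, hne⟩ := exists_part Φ m w xs hmne
        have hns : ¬ varSat Φ j w := fun hv => hm (hv m hpart)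
        have hmove : ∀ i, w i = xs i → cflMove Φ xs w i = xs i := by
          intro i hi
          by_cases hv : varSat Φ i w <;> simp [cflMove, hv, hi]
        have hsub : (Finset.univ.filter fun i => w i = xs i) ⊆
            (Finset.univ.filter fun i => cflMove Φ xs w i = xs i) := by
          intro i hi
          simp only [Finset.mem_filter, Finset.mem_univ, true_and] at hi ⊢
          exact hmove i hi
        have hjnew : j ∈ (Finset.univ.filter fun i => cflMove Φ xs w i = xs i) := by
          exact Finset.mem_filter.2 ⟨Finset.mem_univ _, by simp [cflMove, hns]⟩
        have hjold : j ∉ (Finset.univ.filter fun i => w i = xs i) := by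
          simp [hne]
        have hlt : (Finset.univ.filter fun i => w i = xs i).card <
            (Finset.univ.filter fun i => cflMove Φ xs w i = xs i).card :=
          Finset.card_lt_card ⟨hsub, fun hall => hjold (hall hjnew)⟩
        have : (Finset.univ.filter fun i => (cflMove Φ xs)^[k+1] z i = xs i)
            = (Finset.univ.filter fun i => cflMove Φ xs w i = xs i) := by
          rw [Function.iterate_succ_apply', hw]
        rw [this]
        omega
  rcases key N with h | h
  · exact h
  · have hcle : (Finset.univ.filter fun i => (cflMove Φ xs)^[N] z i = xs i).card ≤ N := by
      calc _ ≤ (Finset.univ : Finset (Fin N)).card := Finset.card_filter_le _ _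
        _ = N := by simp
    have hceq : (Finset.univ.filter fun i => (cflMove Φ xs)^[N] z i = xs i)
        = Finset.univ := Finset.eq_univ_of_card _ (by simp [le_antisymm hcle h])
    have : (cflMove Φ xs)^[N] z = xs := by
      funext i
      have : i ∈ Finset.univ.filter fun i => (cflMove Φ xs)^[N] z i = xs i := by
        rw [hceq]; exact Finset.mem_univ i
      simpa using this
    rw [this]
    exact hxs

section cflvec
variable {N M D : ℕ} {a b : ℝ} (Φ : Fin M → (Fin N → Fin D) → Bool)

lemma den_pos (hD : 0 < D) (ha : 0 < a) (hb0 : 0 < b) :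
    0 < (D : ℝ) - 1 + a / b := by
  have h1 : (1:ℝ) ≤ (D:ℝ) := by exact_mod_cast hD
  have : 0 < a / b := div_pos ha hb0
  linarith

lemma cflVec_nonneg (hD : 0 < D) (ha : 0 < a) (hb0 : 0 < b) (hb1 : b ≤ 1)
    (h : ℕ → Fin N → Fin D) : ∀ t i j, 0 ≤ cflVec a b Φ h t i j := by
  intro t
  induction t with
  | zero =>
    intro i j
    simp only [cflVec]
    positivity
  | succ t ih =>
    intro i j
    have hden := den_pos (a := a) (b := b) hD ha hb0
    simp only [cflVec]
    split
    · split <;> norm_num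
    · have h1 : 0 ≤ (1 - b) * cflVec a b Φ h t i j :=
        mul_nonneg (by linarith) (ih i j)
      have h2 : 0 ≤ (if j = h t i then a else b) / ((D : ℝ) - 1 + a / b) := by
        apply div_nonneg _ hden.le
        split <;> linarith
      linarith

lemma cflVec_ge (hD : 0 < D) (ha : 0 < a) (hb0 : 0 < b) (hb1 : b ≤ 1)
    (h : ℕ → Fin N → Fin D) (t : ℕ) (i : Fin N) (j : Fin D)
    (hns : ¬ varSat Φ i (h t)) :
    min a b / ((D : ℝ) - 1 + a / b) ≤ cflVec a b Φ h (t + 1) i j := by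
  have hden := den_pos (a := a) (b := b) hD ha hb0
  have h1 : 0 ≤ (1 - b) * cflVec a b Φ h t i j :=
    mul_nonneg (by linarith) (cflVec_nonneg Φ hD ha hb0 hb1 h t i j)
  have h2 : min a b / ((D : ℝ) - 1 + a / b) ≤
      (if j = h t i then a else b) / ((D : ℝ) - 1 + a / b) := by
    gcongr
    split
    · exact min_le_left a b
    · exact min_le_right a b
  simp only [cflVec, if_neg hns]
  linarith

lemma gamma0_nonneg (hD : 0 < D) (ha : 0 < a) (hb0 : 0 < b) :
    0 ≤ min a b / ((D : ℝ) - 1 + a / b) :=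
  div_nonneg (le_min ha.le hb0.le) (den_pos hD ha hb0).le

lemma gamma0_le_one (hD : 0 < D) (ha : 0 < a) (hb0 : 0 < b) (hb1 : b ≤ 1) :
    min a b / ((D : ℝ) - 1 + a / b) ≤ 1 := by
  have hden := den_pos (a := a) (b := b) hD ha hb0
  rw [div_le_one hden]
  have h1 : (1:ℝ) ≤ (D:ℝ) := by exact_mod_cast hD
  have h2 : a ≤ a / b := by
    rw [le_div_iff₀ hb0]
    nlinarith
  calc min a b ≤ a := min_le_left a b
    _ ≤ a / b := h2
    _ ≤ (D : ℝ) - 1 + a / b := by linarith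

lemma prod_cflVec_ge (hD : 0 < D) (ha : 0 < a) (hb0 : 0 < b) (hb1 : b ≤ 1)
    (xs : Fin N → Fin D) (h : ℕ → Fin N → Fin D) (t : ℕ) :
    (min a b / ((D : ℝ) - 1 + a / b)) ^ N ≤
      ∏ i, cflVec a b Φ h (t + 1) i (cflMove Φ xs (h t) i) := by
  have : (min a b / ((D : ℝ) - 1 + a / b)) ^ N =
      ∏ _i : Fin N, min a b / ((D : ℝ) - 1 + a / b) := by
    simp [div_pow]
  rw [this]
  apply Finset.prod_le_prod
  · intro i _
    exact gamma0_nonneg hD ha hb0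
  · intro i _
    by_cases hv : varSat Φ i (h t)
    · have hval : cflMove Φ xs (h t) i = h t i := by simp [cflMove, hv]
      have : cflVec a b Φ h (t + 1) i (cflMove Φ xs (h t) i) = 1 := by
        simp [cflVec, hv, hval]
      rw [this]
      exact gamma0_le_one hD ha hb0 hb1
    · exact cflVec_ge Φ hD ha hb0 hb1 h t i _ hv

end cflvec

noncomputable def pathExt {N M D : ℕ} (Φ : Fin M → (Fin N → Fin D) → Bool)
    (xs : Fin N → Fin D) (t : ℕ) (h : ℕ → Fin N → Fin D) : ℕ → Fin N → Fin D :=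
  fun s => if s ≤ t then h s else (cflMove Φ xs)^[s - t] (h t)

def cflCyl {Ω : Type*} {N D : ℕ} (X : ℕ → Ω → Fin N → Fin D) (t : ℕ)
    (h : ℕ → Fin N → Fin D) : Set Ω :=
  {ω | ∀ s ≤ t, X s ω = h s}

lemma pathExt_le {N M D : ℕ} (Φ : Fin M → (Fin N → Fin D) → Bool)
    (xs : Fin N → Fin D) (t : ℕ) (h : ℕ → Fin N → Fin D) {s : ℕ} (hs : s ≤ t) :
    pathExt Φ xs t h s = h s := by simp [pathExt, hs]

lemma pathExt_add {N M D : ℕ} (Φ : Fin M → (Fin N → Fin D) → Bool)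
    (xs : Fin N → Fin D) (t : ℕ) (h : ℕ → Fin N → Fin D) (n : ℕ) :
    pathExt Φ xs t h (t + n) = (cflMove Φ xs)^[n] (h t) := by
  cases n with
  | zero => simp [pathExt]
  | succ n =>
    have h1 : ¬ t + (n + 1) ≤ t := by omega
    have h2 : t + (n + 1) - t = n + 1 := by omega
    simp [pathExt, h1, h2]


/-- **Corollary (to Theorem 1).** For any CSP admitting a satisfying
assignment, the CFL algorithm finds one in almost surely finite time.
The CFL process `X` is characterized by: `X 0` is uniform on assignments,
and conditional on any history `h` up to time `t`, the variables at time
`t+1` are sampled independently from the CFL probability vectors computed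
from that history. The conclusion is that the set of trajectories that
never reach a satisfying assignment is null. -/
theorem cfl_finds_solution_as {Ω : Type*} [MeasurableSpace Ω]
    (μ : Measure Ω) [IsProbabilityMeasure μ]
    {N M D : ℕ} (hD : 0 < D) (a b : ℝ)
    (ha : a ∈ Set.Ioc (0 : ℝ) 1) (hb : b ∈ Set.Ioc (0 : ℝ) 1)
    (Φ : Fin M → (Fin N → Fin D) → Bool)
    (X : ℕ → Ω → Fin N → Fin D) (hX : ∀ t, Measurable (X t))
    (hinit : ∀ y : Fin N → Fin D,
      μ {ω | X 0 ω = y} = ENNReal.ofReal (∏ i : Fin N, cflVec a b Φ (fun _ => y) 0 i (y i)))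
    (hstep : ∀ (t : ℕ) (h : ℕ → Fin N → Fin D) (y : Fin N → Fin D),
      μ ({ω | X (t + 1) ω = y} ∩ {ω | ∀ s ≤ t, X s ω = h s}) =
        ENNReal.ofReal (∏ i : Fin N, cflVec a b Φ h (t + 1) i (y i)) *
          μ {ω | ∀ s ≤ t, X s ω = h s})
    (hsat : ∃ x : Fin N → Fin D, satAll Φ x) :
    μ {ω | ∀ t : ℕ, ¬ satAll Φ (X t ω)} = 0 := by
  classical
  obtain ⟨xs, hxs⟩ := hsat
  obtain ⟨ha0, ha1⟩ := ha
  obtain ⟨hb0, hb1⟩ := hb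
  set γ0 : ℝ := min a b / ((D : ℝ) - 1 + a / b) with hγ0
  have hγ0pos : 0 < γ0 := div_pos (lt_min ha0 hb0) (den_pos hD ha0 hb0)
  -- cylinders are measurable
  have hCylMeas : ∀ (t : ℕ) (h : ℕ → Fin N → Fin D), MeasurableSet (cflCyl X t h) := by
    intro t h
    have : cflCyl X t h = ⋂ s ∈ Set.Iic t, (X s) ⁻¹' {h s} := by
      ext ω
      simp [cflCyl, Set.mem_iInter]
    rw [this]
    exact MeasurableSet.biInter (Set.Iic t).to_countable
      (fun s _ => (hX s) (measurableSet_singleton _))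
  have hstep' : ∀ (t : ℕ) (h : ℕ → Fin N → Fin D) (y : Fin N → Fin D),
      μ ({ω | X (t + 1) ω = y} ∩ cflCyl X t h) =
        ENNReal.ofReal (∏ i : Fin N, cflVec a b Φ h (t + 1) i (y i)) *
          μ (cflCyl X t h) := hstep
  -- chaining lemma
  have chain : ∀ (t : ℕ) (h : ℕ → Fin N → Fin D) (n : ℕ),
      ENNReal.ofReal (γ0 ^ (N * n)) * μ (cflCyl X t h) ≤
        μ (cflCyl X (t + n) (pathExt Φ xs t h)) := by
    intro t h n
    induction n with
    | zero =>
      have heq : cflCyl X (t + 0) (pathExt Φ xs t h) = cflCyl X t h := by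
        ext ω
        simp only [cflCyl, Set.mem_setOf_eq, Nat.add_zero]
        constructor <;> intro hω s hs
        · rw [← pathExt_le Φ xs t h hs]; exact hω s hs
        · rw [pathExt_le Φ xs t h hs]; exact hω s hs
      rw [heq]
      simp
    | succ n ihn =>
      have hset : cflCyl X (t + (n + 1)) (pathExt Φ xs t h) =
          {ω | X (t + n + 1) ω = pathExt Φ xs t h (t + n + 1)} ∩
            cflCyl X (t + n) (pathExt Φ xs t h) := by
        ext ω
        simp only [cflCyl, Set.mem_setOf_eq, Set.mem_inter_iff]
        constructor
        · intro hω
          exact ⟨hω _ (by omega), fun s hs => hω s (by omega)⟩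
        · rintro ⟨h1, h2⟩ s hs
          rcases Nat.lt_or_ge s (t + n + 1) with h' | h'
          · exact h2 s (by omega)
          · have : s = t + n + 1 := by omega
            rw [this]; exact h1
      rw [hset, hstep' (t + n) (pathExt Φ xs t h) (pathExt Φ xs t h (t + n + 1))]
      -- value identity
      have hval : ∀ i, pathExt Φ xs t h (t + n + 1) i =
          cflMove Φ xs (pathExt Φ xs t h (t + n)) i := by
        intro i
        rw [show t + n + 1 = t + (n + 1) by omega, pathExt_add, pathExt_add,
          Function.iterate_succ_apply']
      have hprod : γ0 ^ N ≤ ∏ i : Fin N,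
          cflVec a b Φ (pathExt Φ xs t h) (t + n + 1) i
            (pathExt Φ xs t h (t + n + 1) i) := by
        have := prod_cflVec_ge Φ hD ha0 hb0 hb1 xs (pathExt Φ xs t h) (t + n)
        calc γ0 ^ N ≤ _ := this
          _ = _ := by
            apply Finset.prod_congr rfl
            intro i _
            rw [hval i]
      have hsplit : γ0 ^ (N * (n + 1)) = γ0 ^ N * γ0 ^ (N * n) := by
        rw [← pow_add]
        ring_nf
      calc ENNReal.ofReal (γ0 ^ (N * (n + 1))) * μ (cflCyl X t h)
          = ENNReal.ofReal (γ0 ^ N) *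
            (ENNReal.ofReal (γ0 ^ (N * n)) * μ (cflCyl X t h)) := by
            rw [hsplit, ENNReal.ofReal_mul (by positivity), mul_assoc]
        _ ≤ ENNReal.ofReal (γ0 ^ N) * μ (cflCyl X (t + n) (pathExt Φ xs t h)) :=
            mul_le_mul_right ihn _
        _ ≤ _ := mul_le_mul_left (ENNReal.ofReal_le_ofReal hprod) _
  -- the "never satisfied up to time t" events
  set B : ℕ → Set Ω := fun t => {ω | ∀ s ≤ t, ¬ satAll Φ (X s ω)} with hB
  have hBmeas : ∀ t, MeasurableSet (B t) := by
    intro t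
    have : B t = ⋂ s ∈ Set.Iic t, (X s) ⁻¹' {y | ¬ satAll Φ y} := by
      ext ω
      simp [hB, Set.mem_iInter]
    rw [this]
    exact MeasurableSet.biInter (Set.Iic t).to_countable
      (fun s _ => (hX s) (Set.toFinite _).measurableSet)
  set g : ENNReal := ENNReal.ofReal (γ0 ^ (N * N)) with hg
  have hgne : g ≠ 0 := by
    rw [hg]
    simp only [ne_eq, ENNReal.ofReal_eq_zero, not_le]
    positivity
  -- key step: decay over blocks of N steps
  have keystep : ∀ t : ℕ, μ (B (t + N)) ≤ (1 - g) * μ (B t) := by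
    intro t
    set W : Finset (Fin (t + 1) → Fin N → Fin D) :=
      Finset.univ.filter (fun w => ∀ s, ¬ satAll Φ (w s)) with hW
    set ext : (Fin (t + 1) → Fin N → Fin D) → ℕ → Fin N → Fin D :=
      fun w s => if hs : s < t + 1 then w ⟨s, hs⟩ else xs with hext
    have hext_eq : ∀ w (s : ℕ) (hs : s ≤ t), ext w s = w ⟨s, by omega⟩ := by
      intro w s hs
      simp [hext, Nat.lt_succ_of_le hs, hs]
    have hBt : B t = ⋃ w ∈ W, cflCyl X t (ext w) := by
      ext ω
      simp only [hB, Set.mem_setOf_eq, Set.mem_iUnion]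
      constructor
      · intro hω
        refine ⟨fun s => X s.1 ω, ?_, ?_⟩
        · simp only [hW, Finset.mem_filter, Finset.mem_univ, true_and]
          intro s
          exact hω s.1 (by omega)
        · intro s hs
          rw [hext_eq (fun s : Fin (t + 1) => X s.1 ω) s hs]
      · rintro ⟨w, hwW, hωw⟩ s hs
        rw [hωw s hs, hext_eq w s hs]
        simp only [hW, Finset.mem_filter, Finset.mem_univ, true_and] at hwW
        exact hwW _
    have hdisj : (W : Set (Fin (t + 1) → Fin N → Fin D)).PairwiseDisjoint
        (fun w => cflCyl X t (ext w)) := by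
      intro w _ w' _ hne
      refine Set.disjoint_left.2 fun ω hω hω' => hne ?_
      funext s
      have e1 := hω s.1 (by omega)
      have e2 := hω' s.1 (by omega)
      rw [hext_eq w s.1 (by omega)] at e1
      rw [hext_eq w' s.1 (by omega)] at e2
      have : w ⟨s.1, by omega⟩ = w' ⟨s.1, by omega⟩ := by rw [← e1, ← e2]
      simpa using this
    have hsum : μ (B t) = ∑ w ∈ W, μ (cflCyl X t (ext w)) := by
      rw [hBt]
      exact measure_biUnion_finset hdisj (fun w _ => hCylMeas _ _)
    have hBtN : B (t + N) = ⋃ w ∈ W, (B (t + N) ∩ cflCyl X t (ext w)) := by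
      have hsub : B (t + N) ⊆ B t := fun ω hω s hs => hω s (by omega)
      calc B (t + N) = B (t + N) ∩ B t := (Set.inter_eq_self_of_subset_left hsub).symm
        _ = B (t + N) ∩ ⋃ w ∈ W, cflCyl X t (ext w) := by rw [hBt]
        _ = ⋃ w ∈ W, (B (t + N) ∩ cflCyl X t (ext w)) := Set.inter_iUnion₂ _ _
    have hdisj2 : (W : Set (Fin (t + 1) → Fin N → Fin D)).PairwiseDisjoint
        (fun w => B (t + N) ∩ cflCyl X t (ext w)) := fun w hw w' hw' hne =>
      (hdisj hw hw' hne).mono Set.inter_subset_right Set.inter_subset_right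
    have hsumN : μ (B (t + N)) = ∑ w ∈ W, μ (B (t + N) ∩ cflCyl X t (ext w)) := by
      conv_lhs => rw [hBtN]
      exact measure_biUnion_finset hdisj2
        (fun w _ => (hBmeas _).inter (hCylMeas _ _))
    rw [hsumN, hsum, Finset.mul_sum]
    apply Finset.sum_le_sum
    intro w hw
    set pe := pathExt Φ xs t (ext w) with hpe
    have hDsub : cflCyl X (t + N) pe ⊆ cflCyl X t (ext w) := by
      intro ω hω s hs
      have := hω s (by omega)
      rwa [hpe, pathExt_le Φ xs t (ext w) hs] at this
    have hsatN : satAll Φ (pe (t + N)) := by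
      rw [hpe, pathExt_add]
      exact satAll_iterate Φ xs hxs _
    have hDB : B (t + N) ∩ cflCyl X (t + N) pe = ∅ := by
      ext ω
      simp only [Set.mem_inter_iff, Set.mem_empty_iff_false, iff_false, not_and]
      intro hωB hωD
      exact hωB (t + N) le_rfl (hωD (t + N) le_rfl ▸ hsatN)
    have hμD : g * μ (cflCyl X t (ext w)) ≤ μ (cflCyl X (t + N) pe) :=
      chain t (ext w) N
    calc μ (B (t + N) ∩ cflCyl X t (ext w))
        ≤ μ (cflCyl X t (ext w) \ cflCyl X (t + N) pe) := by
          apply measure_mono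
          intro ω ⟨hω1, hω2⟩
          refine ⟨hω2, fun hω3 => ?_⟩
          have : ω ∈ B (t + N) ∩ cflCyl X (t + N) pe := ⟨hω1, hω3⟩
          rw [hDB] at this
          exact this
      _ = μ (cflCyl X t (ext w)) - μ (cflCyl X (t + N) pe) :=
          measure_diff hDsub (hCylMeas _ _).nullMeasurableSet (measure_ne_top μ _)
      _ ≤ μ (cflCyl X t (ext w)) - g * μ (cflCyl X t (ext w)) :=
          tsub_le_tsub_left hμD _
      _ = (1 - g) * μ (cflCyl X t (ext w)) := by
          rw [ENNReal.sub_mul (fun _ _ => measure_ne_top μ _), one_mul]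
  -- iterate the decay
  have hiter : ∀ k : ℕ, μ (B (k * N)) ≤ (1 - g) ^ k := by
    intro k
    induction k with
    | zero => simpa using prob_le_one
    | succ k ih =>
      have : (k + 1) * N = k * N + N := by ring
      rw [this, pow_succ, mul_comm ((1 - g) ^ k) (1 - g)]
      calc μ (B (k * N + N)) ≤ (1 - g) * μ (B (k * N)) := keystep (k * N)
        _ ≤ (1 - g) * (1 - g) ^ k := mul_le_mul_right ih _
  -- conclude
  have hSsub : ∀ k : ℕ, μ {ω | ∀ t : ℕ, ¬ satAll Φ (X t ω)} ≤ (1 - g) ^ k := by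
    intro k
    refine le_trans (measure_mono ?_) (hiter k)
    intro ω hω s _
    exact hω s
  have hlt : (1 : ENNReal) - g < 1 :=
    ENNReal.sub_lt_self ENNReal.one_ne_top one_ne_zero hgne
  have htend : Filter.Tendsto (fun k : ℕ => (1 - g) ^ k) Filter.atTop (nhds 0) :=
    ENNReal.tendsto_pow_atTop_nhds_zero_of_lt_one hlt
  exact le_antisymm (ge_of_tendsto' htend hSsub) zero_le
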